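/- arXiv:1212.6897 — 3 statements merged into one kernel-verified Lean document; each statement's English description precedes it below -/
import Mathlib

section
/- Consider the open quadrant Q = {(x, y) ∈ ℝ² : x < 0, y > 0} (the NW quadrant of a neighborhood of the origin). If a region S ⊆ Q is bounded below by the graph of a strictly increasing function through the origin and bounded above by either another strictly increasing graph through the origin or a vertical segment descending from a point, then S cannot contain a full translate of any open quadrant {(x,y) : ±x > 0, ∓y > 0} (an 'active' quadrant) based at the origin. -/
/-- Geometric core of Lemma `l_active`: a region `S` inside the NW quadrant
`Q = {x < 0, y > 0}`, bounded below by the graph of a strictly increasing function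
through the origin and bounded above either by another strictly increasing graph
through the origin or by a vertical segment descending from a point, cannot contain
a full open "active" quadrant (NW or SE) based at the origin. -/
theorem stmt_8 (S : Set (ℝ × ℝ)) (f : ℝ → ℝ)
    (hSQ : S ⊆ {p : ℝ × ℝ | p.1 < 0 ∧ 0 < p.2})
    (hf : StrictMono f) (hf0 : f 0 = 0)
    (hbelow : ∀ p ∈ S, f p.1 ≤ p.2)
    (habove : (∃ g : ℝ → ℝ, StrictMono g ∧ g 0 = 0 ∧ ∀ p ∈ S, p.2 ≤ g p.1) ∨
      (∃ q : ℝ × ℝ, ∀ p ∈ S, p.1 ≤ q.1 ∧ p.2 ≤ q.2)) :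
    ¬ ({p : ℝ × ℝ | p.1 < 0 ∧ 0 < p.2} ⊆ S) ∧
    ¬ ({p : ℝ × ℝ | 0 < p.1 ∧ p.2 < 0} ⊆ S) := by
  constructor
  · intro hsub
    rcases habove with ⟨g, hg, hg0, hgle⟩ | ⟨q, hq⟩
    · have hmem : ((-1 : ℝ), (1 : ℝ)) ∈ S := hsub (by norm_num)
      have h1 : (1 : ℝ) ≤ g (-1) := hgle _ hmem
      have h2 : g (-1) < g 0 := hg (by norm_num)
      rw [hg0] at h2
      linarith
    · have hmem : ((-1 : ℝ), max (q.2 + 1) 1) ∈ S := by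
        refine hsub ⟨by norm_num, lt_of_lt_of_le one_pos (le_max_right _ _)⟩
      have h1 := (hq _ hmem).2
      have h2 : q.2 + 1 ≤ max (q.2 + 1) 1 := le_max_left _ _
      simp only at h1
      linarith
  · intro hsub
    have hmem : ((1 : ℝ), (-1 : ℝ)) ∈ S := hsub (by norm_num)
    have := (hSQ hmem).1
    norm_num at this
end

section
/- Let γ ∈ (0, 2π) be the interior angle at a corner point of a planar billiard table. A billiard trajectory hitting the corner admits a unique continuation of the flow for every incoming direction if and only if γ = π/n for some positive integer n; in general there are at most 2 possible continuations. -/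
open Real

/-- Outgoing direction of the corner series branch that first hits the wall at
angle `γ` (obtained by unfolding the wedge of opening `γ`): the incoming
trajectory comes toward the corner from the direction `α ∈ (0, γ)` inside the
wedge, so the straight continuation has direction angle `α + π`; folding the
unfolded picture back into the wedge gives the outgoing direction. -/
noncomputable def cornerBranchB (γ α : ℝ) : ℝ :=
  let m : ℤ := ⌊(α + π) / γ⌋
  if Even m then α + π - m * γ else (m + 1) * γ - (α + π)

/-- The other branch (first collision with the wall at angle `0`), obtained from
the first one by the symmetry `α ↦ γ - α` of the wedge. -/
noncomputable def cornerBranchA (γ α : ℝ) : ℝ :=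
  γ - cornerBranchB γ (γ - α)

noncomputable def foldW (γ x : ℝ) : ℝ :=
  if Even ⌊x / γ⌋ then x - ⌊x / γ⌋ * γ else (⌊x / γ⌋ + 1) * γ - x

lemma branchB_eq (γ α : ℝ) : cornerBranchB γ α = foldW γ (α + π) := rfl

lemma branchA_eq (γ α : ℝ) (hγ : 0 < γ) :
    cornerBranchA γ α = foldW γ (π - α) := by
  have hne : γ ≠ 0 := hγ.ne'
  have h1 : (γ - α + π) / γ = (π - α) / γ + 1 := by field_simp; ring
  have h2 : ⌊(γ - α + π) / γ⌋ = ⌊(π - α) / γ⌋ + 1 := by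
    rw [h1]; exact_mod_cast Int.floor_add_one _
  show γ - cornerBranchB γ (γ - α) = _
  rw [show cornerBranchB γ (γ - α) = foldW γ (γ - α + π) from rfl]
  unfold foldW
  rw [h2]
  rcases Int.even_or_odd ⌊(π - α) / γ⌋ with he | ho
  · rw [if_pos he, if_neg (by simp [Int.even_add_one, he])]
    push_cast; ring
  · have hne' : ¬ Even ⌊(π - α) / γ⌋ := Int.not_even_iff_odd.mpr ho
    rw [if_neg hne', if_pos (Int.even_add_one.mpr hne')]
    push_cast; ring

/-- At a corner of interior angle `γ ∈ (0, 2π)` a billiard trajectory hitting the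
corner has at most `2` continuations (the two branches), and every trajectory
hitting the corner has a unique continuation (the two branches coincide for every
incoming direction) if and only if `γ = π/n` for some positive integer `n`. -/
theorem stmt_11 (γ : ℝ) (hγ : γ ∈ Set.Ioo 0 (2 * π)) :
    (∀ α ∈ Set.Ioo 0 γ,
      ({cornerBranchA γ α, cornerBranchB γ α} : Set ℝ).ncard ≤ 2) ∧
    ((∀ α ∈ Set.Ioo 0 γ, cornerBranchA γ α = cornerBranchB γ α) ↔
      ∃ n : ℕ, 0 < n ∧ γ = π / n) := by
  obtain ⟨hγ0, hγ2⟩ := hγ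
  have hne : γ ≠ 0 := hγ0.ne'
  refine ⟨fun α _ => (Set.ncard_insert_le _ _).trans (by simp), ?_, ?_⟩
  · -- forward direction
    intro h
    set k := ⌊π / γ⌋ with hk
    have hk1 : (k : ℝ) * γ ≤ π := by
      have := Int.floor_le (π / γ)
      rw [← hk] at this
      calc (k : ℝ) * γ ≤ (π / γ) * γ := by
            exact mul_le_mul_of_nonneg_right this hγ0.le
        _ = π := by field_simp
    have hk2 : π < ((k : ℝ) + 1) * γ := by
      have := Int.lt_floor_add_one (π / γ)
      rw [← hk] at this
      calc π = (π / γ) * γ := by field_simp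
        _ < ((k : ℝ) + 1) * γ := by
            exact mul_lt_mul_of_pos_right this hγ0
    rcases eq_or_lt_of_le hk1 with heq | hlt
    · -- π = k γ
      have hkpos : 0 < k := by
        by_contra hkn
        push_neg at hkn
        have : (k : ℝ) ≤ 0 := by exact_mod_cast hkn
        nlinarith [pi_pos]
      refine ⟨k.toNat, ?_, ?_⟩
      · omega
      · have hkr : ((k.toNat : ℕ) : ℝ) = (k : ℝ) := by
          exact_mod_cast congrArg (Int.cast : ℤ → ℝ) (Int.toNat_of_nonneg hkpos.le)
        rw [hkr]
        have : (k : ℝ) ≠ 0 := by positivity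
        field_simp
        linarith [heq]
    · -- contradiction: pick α = min r (γ - r) / 2
      exfalso
      set r := π - (k : ℝ) * γ with hrdef
      have hr0 : 0 < r := by simp [hrdef]; linarith
      have hrγ : r < γ := by simp [hrdef]; nlinarith
      set α := min r (γ - r) / 2 with hα
      have hα1 : α ≤ r / 2 := by
        have := min_le_left r (γ - r); simp [hα]; linarith
      have hα2 : α ≤ (γ - r) / 2 := by
        have := min_le_right r (γ - r); simp [hα]; linarith
      have hα0 : 0 < α := by
        rw [hα]; exact half_pos (lt_min hr0 (by linarith))
      have hαγ : α < γ := by linarith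
      have F1 : ⌊(α + π) / γ⌋ = k := by
        rw [Int.floor_eq_iff]
        constructor
        · rw [le_div_iff₀ hγ0]; linarith
        · rw [div_lt_iff₀ hγ0]; push_cast; nlinarith
      have F2 : ⌊(π - α) / γ⌋ = k := by
        rw [Int.floor_eq_iff]
        constructor
        · rw [le_div_iff₀ hγ0]; linarith
        · rw [div_lt_iff₀ hγ0]; push_cast; nlinarith
      have heq := h α ⟨hα0, hαγ⟩
      rw [branchA_eq γ α hγ0, branchB_eq] at heq
      unfold foldW at heq
      rw [F1, F2] at heq
      rcases Int.even_or_odd k with he | ho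
      · rw [if_pos he, if_pos he] at heq; linarith
      · have hne' : ¬ Even k := Int.not_even_iff_odd.mpr ho
        rw [if_neg hne', if_neg hne'] at heq; linarith
  · -- backward direction
    rintro ⟨n, hn, hγn⟩ α ⟨hα0, hαγ⟩
    have hnR : (0 : ℝ) < n := by exact_mod_cast hn
    have hπ : π = (n : ℝ) * γ := by
      rw [hγn]; field_simp
    have F1 : ⌊(α + π) / γ⌋ = (n : ℤ) := by
      rw [Int.floor_eq_iff]
      constructor
      · rw [le_div_iff₀ hγ0]; push_cast; linarith
      · rw [div_lt_iff₀ hγ0]; push_cast; linarith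
    have F2 : ⌊(π - α) / γ⌋ = (n : ℤ) - 1 := by
      rw [Int.floor_eq_iff]
      constructor
      · rw [le_div_iff₀ hγ0]; push_cast; linarith
      · rw [div_lt_iff₀ hγ0]; push_cast; linarith
    rw [branchA_eq γ α hγ0, branchB_eq]
    unfold foldW
    rw [F1, F2]
    rcases Int.even_or_odd (n : ℤ) with he | ho
    · have ho' : ¬ Even ((n : ℤ) - 1) := by
        rcases he with ⟨m, hm⟩
        rw [Int.not_even_iff_odd]
        exact ⟨m - 1, by omega⟩
      rw [if_pos he, if_neg ho']
      push_cast; linarith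
    · have he' : Even ((n : ℤ) - 1) := by
        rcases ho with ⟨m, hm⟩
        exact ⟨m, by omega⟩
      rw [if_neg (Int.not_even_iff_odd.mpr ho), if_pos he']
      push_cast; linarith
end

section
/- For a dispersing billiard with differential DF as above, any unstable tangent vector v at z = (r,φ) satisfies |DF v| ≥ (C/cos φ')·|v| where φ' is the angle coordinate of F z and C > 0 depends only on the lower bounds for the curvature κ_min > 0 and upper/lower bounds for the free path. -/
open Matrix

/-- Expansion of unstable vectors: there is a constant `C > 0`, depending only on
the curvature lower bound `κmin` and the bounds `τmin ≤ τ ≤ τmax` on the free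
path, such that every unstable vector `v` (i.e. `δr·δφ ≥ 0`) satisfies
`|DF v| ≥ (C / cos φ')·|v|`, where `DF` is the standard billiard differential. -/
theorem stmt_13 (κmin τmin τmax : ℝ)
    (hκmin : 0 < κmin) (hτmin : 0 < τmin) (hττ : τmin ≤ τmax) :
    ∃ C : ℝ, 0 < C ∧
      ∀ τ κ κ' φ φ' : ℝ,
        τmin ≤ τ → τ ≤ τmax → κmin ≤ κ → κmin ≤ κ' →
        0 ≤ Real.cos φ → 0 < Real.cos φ' →
        ∀ DF : Matrix (Fin 2) (Fin 2) ℝ,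
          DF = -(1 / Real.cos φ') •
            !![τ * κ + Real.cos φ, τ;
               τ * κ * κ' + κ' * Real.cos φ + κ * Real.cos φ',
               τ * κ' + Real.cos φ'] →
          ∀ v : Fin 2 → ℝ, 0 ≤ v 0 * v 1 →
            Real.sqrt ((DF.mulVec v 0) ^ 2 + (DF.mulVec v 1) ^ 2) ≥
              (C / Real.cos φ') * Real.sqrt ((v 0) ^ 2 + (v 1) ^ 2) := by
  refine ⟨min (τmin * κmin) τmin, lt_min (by positivity) hτmin, ?_⟩
  intro τ κ κ' φ φ' h1 h2 h3 h4 hφ hφ' DF hDF v hv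
  set C := min (τmin * κmin) τmin with hCdef
  have hC0 : 0 < C := lt_min (by positivity) hτmin
  subst hDF
  have h0 : ∀ i, (((-(1 / Real.cos φ')) •
      !![τ * κ + Real.cos φ, τ;
         τ * κ * κ' + κ' * Real.cos φ + κ * Real.cos φ',
         τ * κ' + Real.cos φ']).mulVec v) i =
      (-(1 / Real.cos φ')) * (!![τ * κ + Real.cos φ, τ;
         τ * κ * κ' + κ' * Real.cos φ + κ * Real.cos φ',
         τ * κ' + Real.cos φ'].mulVec v) i := fun i => by
    rw [Matrix.smul_mulVec]; simp
  rw [h0 0, h0 1]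
  have m0 : (!![τ * κ + Real.cos φ, τ;
      τ * κ * κ' + κ' * Real.cos φ + κ * Real.cos φ',
      τ * κ' + Real.cos φ'].mulVec v) 0 =
      (τ * κ + Real.cos φ) * v 0 + τ * v 1 := by
    simp [Matrix.mulVec, dotProduct, Fin.sum_univ_two, vecHead, vecTail]
  rw [m0]
  have hA : C ≤ τ * κ + Real.cos φ := by
    have : τmin * κmin ≤ τ * κ := by nlinarith
    have h := min_le_left (τmin * κmin) τmin
    nlinarith
  have hB : C ≤ τ := le_trans (min_le_right _ _) h1
  have key : (C / Real.cos φ') ^ 2 * ((v 0) ^ 2 + (v 1) ^ 2) ≤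
      ((-(1 / Real.cos φ')) * ((τ * κ + Real.cos φ) * v 0 + τ * v 1)) ^ 2 := by
    have hc2 : (0:ℝ) < Real.cos φ' ^ 2 := by positivity
    have e : ((-(1 / Real.cos φ')) * ((τ * κ + Real.cos φ) * v 0 + τ * v 1)) ^ 2 =
        ((τ * κ + Real.cos φ) * v 0 + τ * v 1) ^ 2 / Real.cos φ' ^ 2 := by
      field_simp
    rw [e, div_pow, div_mul_eq_mul_div]
    gcongr
    have hA0 : 0 < τ * κ + Real.cos φ := hC0.trans_le hA
    have hB0 : 0 < τ := hC0.trans_le hB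
    nlinarith [mul_nonneg (mul_nonneg (sub_nonneg.mpr hA) (by linarith : (0:ℝ) ≤ τ * κ + Real.cos φ + C)) (sq_nonneg (v 0)),
      mul_nonneg (mul_nonneg (sub_nonneg.mpr hB) (by linarith : (0:ℝ) ≤ τ + C)) (sq_nonneg (v 1)),
      mul_nonneg (mul_nonneg hA0.le hB0.le) hv]
  have step1 : (C / Real.cos φ') * Real.sqrt ((v 0) ^ 2 + (v 1) ^ 2) =
      Real.sqrt ((C / Real.cos φ') ^ 2 * ((v 0) ^ 2 + (v 1) ^ 2)) := by
    rw [Real.sqrt_mul (by positivity), Real.sqrt_sq (by positivity)]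
  rw [ge_iff_le, step1]
  exact Real.sqrt_le_sqrt (key.trans (le_add_of_nonneg_right (sq_nonneg _)))
end
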